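/- Let V be a real inner product space, let u₁, u₂, n ∈ V be unit vectors with n orthogonal to both u₁ and u₂, and let β ∈ [0, π/4]. Set α to be the angle between u₁ and u₂, and define v₁ = (cos β) • u₁ + (sin β) • n and v₂ = (cos β) • u₂ + (sin β) • n. Then the angle between v₁ and v₂ is at least α/2. -/

import Mathlib

set_option maxHeartbeats 800000


open Real InnerProductGeometry

/-- Lemma 1 of the paper: two unit segments each forming the same angle
`β ≤ π/4` with a plane (with a common foot on the plane) and whose
projections onto the plane form angle `α` themselves form an angle of
at least `α / 2`. -/
theorem angle_of_lifted_ge_half_angle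
    {V : Type*} [NormedAddCommGroup V] [InnerProductSpace ℝ V]
    (u₁ u₂ n : V) (hu₁ : ‖u₁‖ = 1) (hu₂ : ‖u₂‖ = 1) (hn : ‖n‖ = 1)
    (hn₁ : inner ℝ u₁ n = (0 : ℝ)) (hn₂ : inner ℝ u₂ n = (0 : ℝ))
    (β : ℝ) (hβ : β ∈ Set.Icc 0 (π / 4)) :
    angle u₁ u₂ / 2 ≤
      angle (cos β • u₁ + sin β • n) (cos β • u₂ + sin β • n) := by
  obtain ⟨hβ0, hβ4⟩ := hβ
  have hn₁' : inner ℝ n u₁ = (0 : ℝ) := by rw [real_inner_comm]; exact hn₁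
  have hn₂' : inner ℝ n u₂ = (0 : ℝ) := by rw [real_inner_comm]; exact hn₂
  have hu₁s : inner ℝ u₁ u₁ = (1 : ℝ) := by
    rw [real_inner_self_eq_norm_sq, hu₁]; norm_num
  have hu₂s : inner ℝ u₂ u₂ = (1 : ℝ) := by
    rw [real_inner_self_eq_norm_sq, hu₂]; norm_num
  have hns : inner ℝ n n = (1 : ℝ) := by
    rw [real_inner_self_eq_norm_sq, hn]; norm_num
  set α := angle u₁ u₂ with hα
  have hcosα : inner ℝ u₁ u₂ = Real.cos α := by
    have := cos_angle u₁ u₂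
    rw [hu₁, hu₂] at this
    rw [← hα] at this
    simp at this
    linarith
  set v₁ := cos β • u₁ + sin β • n
  set v₂ := cos β • u₂ + sin β • n
  have hv₁ : ‖v₁‖ = 1 := by
    have h : ‖v₁‖ ^ 2 = 1 := by
      rw [← real_inner_self_eq_norm_sq]
      simp only [v₁, inner_add_add_self, real_inner_smul_left, real_inner_smul_right,
        hu₁s, hns, hn₁, hn₁']
      ring_nf
      nlinarith [sin_sq_add_cos_sq β]
    nlinarith [norm_nonneg v₁]
  have hv₂ : ‖v₂‖ = 1 := by
    have h : ‖v₂‖ ^ 2 = 1 := by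
      rw [← real_inner_self_eq_norm_sq]
      simp only [v₂, inner_add_add_self, real_inner_smul_left, real_inner_smul_right,
        hu₂s, hns, hn₂, hn₂']
      ring_nf
      nlinarith [sin_sq_add_cos_sq β]
    nlinarith [norm_nonneg v₂]
  have hinner : inner ℝ v₁ v₂ = cos β ^ 2 * Real.cos α + sin β ^ 2 := by
    simp only [v₁, v₂, inner_add_left, inner_add_right, real_inner_smul_left,
      real_inner_smul_right, hcosα, hn₁, hn₂', hns]
    ring
  have hangle : angle v₁ v₂ = Real.arccos (cos β ^ 2 * Real.cos α + sin β ^ 2) := by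
    rw [angle, hinner, hv₁, hv₂]
    norm_num
  rw [hangle]
  have hα0 : 0 ≤ α := angle_nonneg u₁ u₂
  have hαπ : α ≤ π := angle_le_pi u₁ u₂
  -- reduce to cos inequality
  have key : cos β ^ 2 * Real.cos α + sin β ^ 2 ≤ Real.cos (α / 2) := by
    have hc2 : Real.cos α = 2 * Real.cos (α / 2) ^ 2 - 1 := by
      have h := Real.cos_sq (α / 2)
      rw [show 2 * (α / 2) = α by ring] at h
      linarith
    have ht0 : 0 ≤ Real.cos (α / 2) := by
      apply Real.cos_nonneg_of_mem_Icc
      constructor <;> [linarith [Real.pi_pos]; linarith]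
    have ht1 : Real.cos (α / 2) ≤ 1 := Real.cos_le_one _
    have hc : Real.cos β ≥ Real.cos (π / 4) := by
      apply Real.cos_le_cos_of_nonneg_of_le_pi hβ0 _ hβ4
      linarith [Real.pi_pos]
    have h4 : Real.cos (π / 4) = Real.sqrt 2 / 2 := Real.cos_pi_div_four
    have hcb : Real.cos β ^ 2 ≥ 1 / 2 := by
      have h2 : Real.sqrt 2 ^ 2 = 2 := Real.sq_sqrt (by norm_num)
      nlinarith [Real.sqrt_nonneg 2]
    have hs : sin β ^ 2 = 1 - cos β ^ 2 := by nlinarith [sin_sq_add_cos_sq β]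
    rw [hs, hc2]
    nlinarith [mul_nonneg (sub_nonneg.2 ht1)
      (by nlinarith : (0:ℝ) ≤ 2 * Real.cos β ^ 2 * (1 + Real.cos (α / 2)) - 1)]
  have hge : (-1 : ℝ) ≤ cos β ^ 2 * Real.cos α + sin β ^ 2 := by
    nlinarith [Real.neg_one_le_cos α, sin_sq_add_cos_sq β, sq_nonneg (cos β), sq_nonneg (sin β)]
  calc α / 2 = Real.arccos (Real.cos (α / 2)) := by
        rw [Real.arccos_cos (by linarith) (by linarith)]
    _ ≤ Real.arccos (cos β ^ 2 * Real.cos α + sin β ^ 2) := by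
        simp only [Real.arccos]
        have := Real.monotone_arcsin key
        linarith
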